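/- Let d ∈ ℕ, ℏ > 0, and for z = (q,p) ∈ ℝ^d × ℝ^d define the Heisenberg translation of a function f : ℝ^d → ℂ by (T(z)f)(x) = exp((i/ℏ)(p·x − p·q/2))·f(x−q). Let t ↦ z_t = (q_t, p_t) be a continuously differentiable path in ℝ^{2d} and let f be continuously differentiable. Then for every t and every x ∈ ℝ^d, iℏ·(d/dt)[(T(z_t)f)(x)] = ( T(z_t)·g_t )(x), where g_t(y) = (1/2)σ(z_t, ż_t)·f(y) − iℏ·(q̇_t·∇f(y)) − (ṗ_t·y)·f(y) and σ((q,p),(q',p')) = p·q' − q·p' is the standard symplectic form on ℝ^{2d}. -/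

import Mathlib

open Complex

/-- Time derivative of a Heisenberg-translated function along a `C¹` path
`z_t = (q_t, p_t)` in phase space:
`iℏ d/dt (T(z_t)f)(x) = (T(z_t)g_t)(x)` with
`g_t(y) = ½σ(z_t,ż_t) f(y) − iℏ q̇_t·∇f(y) − (ṗ_t·y) f(y)`. -/
theorem stmt_12 (d : ℕ) (ℏ : ℝ) (hℏ : 0 < ℏ)
    (q p : ℝ → EuclideanSpace ℝ (Fin d)) (hq : ContDiff ℝ 1 q) (hp : ContDiff ℝ 1 p)
    (f : EuclideanSpace ℝ (Fin d) → ℂ) (hf : ContDiff ℝ 1 f)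
    (t : ℝ) (x : EuclideanSpace ℝ (Fin d)) :
    let T : EuclideanSpace ℝ (Fin d) × EuclideanSpace ℝ (Fin d) →
        (EuclideanSpace ℝ (Fin d) → ℂ) → EuclideanSpace ℝ (Fin d) → ℂ :=
      fun z g y => Complex.exp ((Complex.I / (ℏ : ℂ)) *
          Complex.ofReal ((inner ℝ z.2 y : ℝ) - (inner ℝ z.2 z.1 : ℝ) / 2)) * g (y - z.1)
    let σ : (EuclideanSpace ℝ (Fin d) × EuclideanSpace ℝ (Fin d)) →
        (EuclideanSpace ℝ (Fin d) × EuclideanSpace ℝ (Fin d)) → ℝ :=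
      fun z w => (inner ℝ z.2 w.1 : ℝ) - (inner ℝ z.1 w.2 : ℝ)
    let g : EuclideanSpace ℝ (Fin d) → ℂ := fun y =>
      Complex.ofReal ((1 / 2) * σ (q t, p t) (deriv q t, deriv p t)) * f y
        - Complex.I * (ℏ : ℂ) * fderiv ℝ f y (deriv q t)
        - Complex.ofReal ((inner ℝ (deriv p t) y : ℝ)) * f y
    ∃ D : ℂ, HasDerivAt (fun τ => T (q τ, p τ) f x) D t
      ∧ Complex.I * (ℏ : ℂ) * D = T (q t, p t) g x := by
  intro T σ g
  have hq' : HasDerivAt q (deriv q t) t :=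
    ((hq.differentiable one_ne_zero) t).hasDerivAt
  have hp' : HasDerivAt p (deriv p t) t :=
    ((hp.differentiable one_ne_zero) t).hasDerivAt
  set q' := deriv q t
  set p' := deriv p t
  -- phase function
  have hφ : HasDerivAt (fun τ => (inner ℝ (p τ) x : ℝ) - (inner ℝ (p τ) (q τ) : ℝ) / 2)
      ((inner ℝ p' x : ℝ) - ((inner ℝ (p t) q' : ℝ) + (inner ℝ p' (q t) : ℝ)) / 2) t := by
    have h1 : HasDerivAt (fun τ => (inner ℝ (p τ) x : ℝ))
        ((inner ℝ (p t) (0:EuclideanSpace ℝ (Fin d)) : ℝ) + (inner ℝ p' x : ℝ)) t :=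
      HasDerivAt.inner ℝ hp' (hasDerivAt_const t x)
    have h2 : HasDerivAt (fun τ => (inner ℝ (p τ) (q τ) : ℝ))
        ((inner ℝ (p t) q' : ℝ) + (inner ℝ p' (q t) : ℝ)) t :=
      HasDerivAt.inner ℝ hp' hq'
    have h := h1.sub (h2.div_const 2)
    simp only [inner_zero_right, zero_add] at h
    exact h
  set φ' : ℝ := (inner ℝ p' x : ℝ) - ((inner ℝ (p t) q' : ℝ) + (inner ℝ p' (q t) : ℝ)) / 2 with hφ'def
  set E : ℂ := Complex.exp ((Complex.I / (ℏ : ℂ)) *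
      Complex.ofReal ((inner ℝ (p t) x : ℝ) - (inner ℝ (p t) (q t) : ℝ) / 2)) with hEdef
  have hE : HasDerivAt (fun τ => Complex.exp ((Complex.I / (ℏ : ℂ)) *
      Complex.ofReal ((inner ℝ (p τ) x : ℝ) - (inner ℝ (p τ) (q τ) : ℝ) / 2)))
      (E * ((Complex.I / (ℏ : ℂ)) * (φ' : ℂ))) t := by
    exact ((hφ.ofReal_comp).const_mul (Complex.I / (ℏ : ℂ))).cexp
  have hF : HasDerivAt (fun τ => f (x - q τ)) (fderiv ℝ f (x - q t) (-q')) t := by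
    have hxq : HasDerivAt (fun τ => x - q τ) (-q') t := by
      have h := (hasDerivAt_const t x).sub hq'
      simp only [zero_sub] at h
      exact h
    have hfd : HasFDerivAt f (fderiv ℝ f (x - q t)) (x - q t) :=
      ((hf.differentiable one_ne_zero) (x - q t)).hasFDerivAt
    exact hfd.comp_hasDerivAt t hxq
  refine ⟨E * ((Complex.I / (ℏ : ℂ)) * (φ' : ℂ)) * f (x - q t)
      + E * fderiv ℝ f (x - q t) (-q'), hE.mul hF, ?_⟩
  show Complex.I * (ℏ : ℂ) * _ = E * g (x - q t)
  have hmap : (fderiv ℝ f (x - q t)) (-q') = -(fderiv ℝ f (x - q t)) q' := by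
    simp
  rw [hmap]
  simp only [g, σ]
  have hinner : (inner ℝ p' (x - q t) : ℝ) = (inner ℝ p' x : ℝ) - (inner ℝ p' (q t) : ℝ) :=
    inner_sub_right _ _ _
  have hsym : (inner ℝ (q t) p' : ℝ) = (inner ℝ p' (q t) : ℝ) := real_inner_comm _ _
  rw [hinner, hsym, hφ'def]
  have hℏ0 : (ℏ : ℂ) ≠ 0 := by exact_mod_cast hℏ.ne'
  push_cast
  field_simp
  ring_nf
  rw [Complex.I_sq]
  ring
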